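/- Let K be a field and V a K-vector space of finite dimension at least 3. If φ : V → V is a linear automorphism such that the induced automorphism Λ²φ of Λ²V is the identity, then φ = id_V or φ = -id_V. -/

import Mathlib

open ExteriorAlgebra

/-- The wedge of a linearly independent family is nonzero. -/
lemma aux_iMulti_ne_zero (K : Type*) [Field K] (V : Type*) [AddCommGroup V] [Module K V]
    {n : ℕ} {f : Fin n → V} (hf : LinearIndependent K f) :
    ExteriorAlgebra.ιMulti K n f ≠ 0 := by
  classical
  set ψ : (Fin n → K) →ₗ[K] V := Fintype.linearCombination K f with hψ
  have hker : LinearMap.ker ψ = ⊥ := by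
    rw [LinearMap.ker_eq_bot']
    intro m hm
    funext i
    refine Fintype.linearIndependent_iff.1 hf m ?_ i
    simpa [hψ, Fintype.linearCombination_apply] using hm
  obtain ⟨g, hg⟩ := ψ.exists_leftInverse_of_injective hker
  set F : V [⋀^Fin n]→ₗ[K] K := (Matrix.detRowAlternating).compLinearMap g with hF
  have hgf : ∀ i, g (f i) = Pi.single i (1 : K) := by
    intro i
    have h1 : ψ (Pi.single i (1 : K)) = f i := by
      simp [hψ, Fintype.linearCombination_apply_single]
    calc g (f i) = (g ∘ₗ ψ) (Pi.single i 1) := by rw [LinearMap.comp_apply, h1]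
    _ = Pi.single i 1 := by rw [hg]; rfl
  have hFf : F f = 1 := by
    have hmat : (Matrix.of fun i => g (f i)) = (1 : Matrix (Fin n) (Fin n) K) := by
      ext i j
      simp [hgf, Pi.single_apply, Matrix.one_apply, eq_comm]
    have : F f = (Matrix.of fun i => g (f i)).det := by
      rfl
    rw [this, hmat, Matrix.det_one]
  intro h
  set F' : ∀ i, V [⋀^Fin i]→ₗ[K] K :=
    Function.update (fun i => (0 : V [⋀^Fin i]→ₗ[K] K)) n F with hF'
  have h2 := congrArg (ExteriorAlgebra.liftAlternating F') h
  rw [ExteriorAlgebra.liftAlternating_apply_ιMulti, map_zero] at h2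
  have h3 : F' n = F := by simp [hF']
  rw [h3, hFf] at h2
  exact one_ne_zero h2

/-- Let `V` be a `K`-vector space of finite dimension `≥ 3`.  If a linear
automorphism `φ` of `V` induces the identity on `⋀² V`, then `φ = ±id`. -/
theorem eq_id_or_neg_id_of_exteriorPower_map_eq_id
    (K : Type*) [Field K] (V : Type*) [AddCommGroup V] [Module K V]
    [FiniteDimensional K V] (hdim : 3 ≤ Module.finrank K V)
    (φ : V →ₗ[K] V) (hφ : Function.Bijective φ)
    (hid : ∀ x ∈ ⋀[K]^2 V, ExteriorAlgebra.map φ x = x) :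
    φ = LinearMap.id ∨ φ = -LinearMap.id := by
  classical
  -- the wedge identity
  have hw : ∀ v w : V, ι K (φ v) * ι K (φ w) = ι K v * ι K w := by
    intro v w
    have hm : ι K v * ι K w ∈ ⋀[K]^2 V := by
      have : (⋀[K]^2 V) = LinearMap.range (ι K : V →ₗ[K] ExteriorAlgebra K V) *
          LinearMap.range (ι K : V →ₗ[K] ExteriorAlgebra K V) := sq _
      rw [this]
      exact Submodule.mul_mem_mul (LinearMap.mem_range_self _ v) (LinearMap.mem_range_self _ w)
    have h := hid _ hm
    rwa [map_mul, map_apply_ι, map_apply_ι] at h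
  -- every vector is an eigenvector
  have heig : ∀ v : V, ∃ c : K, φ v = c • v := by
    intro v
    rcases eq_or_ne v 0 with rfl | hv
    · exact ⟨0, by simp⟩
    by_cases hsp : φ v ∈ Submodule.span K {v}
    · rcases Submodule.mem_span_singleton.1 hsp with ⟨c, hc⟩
      exact ⟨c, hc.symm⟩
    exfalso
    have hpair : LinearIndependent K ![φ v, v] := by
      rw [linearIndependent_fin2]
      refine ⟨by simpa using hv, fun a ha => ?_⟩
      apply hsp
      rw [Submodule.mem_span_singleton]
      exact ⟨a, by simpa using ha⟩
    -- there is a vector outside the span of the pair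
    have hne : Submodule.span K (Set.range ![φ v, v]) ≠ ⊤ := by
      intro htop
      have h2 : Module.finrank K (Submodule.span K (Set.range ![φ v, v])) ≤ 2 :=
        le_trans (finrank_range_le_card (R := K) ![φ v, v]) (by simp)
      rw [htop, finrank_top] at h2
      omega
    obtain ⟨w, hw'⟩ : ∃ w, w ∉ Submodule.span K (Set.range ![φ v, v]) := by
      by_contra hcon
      push_neg at hcon
      exact hne (Submodule.eq_top_iff'.2 hcon)
    -- the triple is linearly independent
    have htriple : LinearIndependent K ![φ v, v, w] := by
      rw [linearIndependent_fin_succ']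
      constructor
      · have : Fin.init ![φ v, v, w] = ![φ v, v] := by
          funext i
          fin_cases i <;> rfl
        rw [this]; exact hpair
      · have : Fin.init ![φ v, v, w] = ![φ v, v] := by
          funext i
          fin_cases i <;> rfl
        rw [this]
        exact hw'
    have hne0 := aux_iMulti_ne_zero K V htriple
    apply hne0
    have hexp : ExteriorAlgebra.ιMulti K 3 ![φ v, v, w] = ι K (φ v) * (ι K v * (ι K w * 1)) := by
      rw [ExteriorAlgebra.ιMulti_apply]
      simp [List.ofFn_succ]
    rw [hexp, mul_one]
    have h1 : ι K (φ v) * (ι K v * ι K w) = ι K (φ v) * (ι K (φ v) * ι K (φ w)) := by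
      rw [hw v w]
    rw [h1, ← mul_assoc, ι_sq_zero, zero_mul]
  -- all eigenvalues agree
  have b := Module.finBasis K V
  set v₀ : V := b ⟨0, by omega⟩ with hv₀def
  set v₁ : V := b ⟨1, by omega⟩ with hv₁def
  have hv₀ : v₀ ≠ 0 := b.ne_zero _
  obtain ⟨c, hc⟩ := heig v₀
  have hall : ∀ w : V, φ w = c • w := by
    intro w
    rcases eq_or_ne w 0 with rfl | hw0
    · simp
    obtain ⟨a, ha⟩ := heig w
    by_cases hsp : w ∈ Submodule.span K {v₀}
    · rcases Submodule.mem_span_singleton.1 hsp with ⟨k, hk⟩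
      have hk0 : k ≠ 0 := by
        rintro rfl
        simp at hk
        exact hw0 hk.symm
      rw [← hk, map_smul, hc, smul_comm]
    · -- v₀ and w independent
      obtain ⟨d, hd⟩ := heig (v₀ + w)
      have hdep : (d - c) • v₀ + (d - a) • w = 0 := by
        have : φ (v₀ + w) = c • v₀ + a • w := by rw [map_add, hc, ha]
        rw [hd, smul_add] at this
        rw [sub_smul, sub_smul]
        linear_combination (norm := module) this
      have hind : LinearIndependent K ![v₀, w] := by
        rw [linearIndependent_fin2]
        refine ⟨hw0, fun k hk => hsp ?_⟩
        rw [Submodule.mem_span_singleton]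
        simp only [Matrix.cons_val_one, Matrix.head_cons, Matrix.cons_val_zero] at hk
        rcases eq_or_ne k 0 with rfl | hk0
        · simp at hk
          exact absurd hk.symm hv₀
        · exact ⟨k⁻¹, by rw [← hk, smul_smul, inv_mul_cancel₀ hk0, one_smul]⟩
      have h2 := hind
      rw [linearIndependent_fin2] at h2
      have : d - c = 0 ∧ d - a = 0 := by
        by_contra hcon
        have hi := Fintype.linearIndependent_iff.1 hind ![d - c, d - a] (by
          simpa [Fin.sum_univ_two] using hdep)
        exact hcon ⟨by simpa using hi 0, by simpa using hi 1⟩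
      have hdc : d = c := sub_eq_zero.1 this.1
      have hda : d = a := sub_eq_zero.1 this.2
      rw [ha, show a = c from hda.symm.trans hdc]
  -- c² = 1
  have hpair01 : LinearIndependent K ![v₀, v₁] := by
    have hinj : Function.Injective (fun i : Fin 2 => (⟨i, by omega⟩ : Fin (Module.finrank K V))) := by
      intro i j hij
      simpa [Fin.ext_iff] using hij
    have := b.linearIndependent.comp _ hinj
    have heq : (b ∘ fun i : Fin 2 => (⟨i, by omega⟩ : Fin (Module.finrank K V))) = ![v₀, v₁] := by
      funext i
      fin_cases i <;> rfl
    rwa [heq] at this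
  have hX : ι K v₀ * ι K v₁ ≠ 0 := by
    have h := aux_iMulti_ne_zero K V hpair01
    intro hz
    apply h
    rw [ExteriorAlgebra.ιMulti_apply]
    simp [List.ofFn_succ]
    exact hz
  have hc2 : c * c = 1 := by
    have h := hw v₀ v₁
    rw [hall v₀, hall v₁, map_smul, map_smul, smul_mul_smul_comm] at h
    by_contra hne
    apply hX
    have : (c * c - 1) • (ι K v₀ * ι K v₁) = 0 := by
      rw [sub_smul, one_smul, h, sub_self]
    exact (smul_eq_zero.1 this).resolve_left (sub_ne_zero.2 hne)
  rcases mul_self_eq_one_iff.1 hc2 with h1 | h1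
  · left
    ext x
    rw [LinearMap.id_apply, hall x, h1, one_smul]
  · right
    ext x
    rw [hall x, h1, LinearMap.neg_apply, LinearMap.id_apply, neg_one_smul]
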